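/- There is a ring homomorphism ρ : Λ → M₂(𝔽₂) (2×2 matrices over the field with two elements) with ρ(ω) the matrix with rows (0,1),(1,1) and ρ(y) the matrix with rows (0,1),(1,0); moreover there is a group homomorphism σ₂ : Λ^{N=1} → ℤ/2 (obtained from ρ by composing with the sign of the permutation action of GL₂(𝔽₂) on (𝔽₂)²) satisfying σ₂(h) = 1, σ₂(γ) = 0, and σ₂(−1) = 0. In particular σ₂ is a nontrivial homomorphism. -/

import Mathlib

open Quaternion

noncomputable section

set_option linter.unnecessarySeqFocus false

/-- `x = i` in `D = ℍ[ℚ, -3, 5]`. -/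
def qx : ℍ[ℚ, -3, 5] := ⟨0, 1, 0, 0⟩
/-- `y = j` in `D = ℍ[ℚ, -3, 5]`. -/
def qy : ℍ[ℚ, -3, 5] := ⟨0, 0, 1, 0⟩
/-- `ω = (−1 + x)/2`. -/
def qω : ℍ[ℚ, -3, 5] := (2 : ℚ)⁻¹ • (-1 + qx)
/-- `h = 4 + x·y`. -/
def qh : ℍ[ℚ, -3, 5] := 4 + qx * qy
/-- `γ = 4 + 5ω² − 2y`. -/
def qγ : ℍ[ℚ, -3, 5] := 4 + 5 * qω ^ 2 - 2 * qy

/-- The maximal order `Λ = ℤ⟨ω, y⟩ ⊆ D`, the subring generated by `ω` and `y`. -/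
def Λ : Subring ℍ[ℚ, -3, 5] := Subring.closure {qω, qy}

lemma qω_mem : qω ∈ Λ := Subring.subset_closure (Set.mem_insert _ _)
lemma qy_mem : qy ∈ Λ := Subring.subset_closure (Set.mem_insert_of_mem _ rfl)

lemma qx_mem : qx ∈ Λ := by
  have hx : qx = qω + qω + 1 := by ext <;> simp [qω, qx] <;> norm_num
  rw [hx]
  exact Subring.add_mem _ (Subring.add_mem _ qω_mem qω_mem) (Subring.one_mem _)

lemma qh_mem : qh ∈ Λ := by
  have h4 : (4 : ℍ[ℚ, -3, 5]) ∈ Λ := by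
    have : (4 : ℍ[ℚ, -3, 5]) = ((4 : ℕ) : ℍ[ℚ, -3, 5]) := by norm_cast
    rw [this]; exact natCast_mem Λ 4
  exact Subring.add_mem _ h4 (Subring.mul_mem _ qx_mem qy_mem)

lemma qγ_mem : qγ ∈ Λ := by
  have h4 : (4 : ℍ[ℚ, -3, 5]) ∈ Λ := by
    have : (4 : ℍ[ℚ, -3, 5]) = ((4 : ℕ) : ℍ[ℚ, -3, 5]) := by norm_cast
    rw [this]; exact natCast_mem Λ 4
  have h5 : (5 : ℍ[ℚ, -3, 5]) ∈ Λ := by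
    have : (5 : ℍ[ℚ, -3, 5]) = ((5 : ℕ) : ℍ[ℚ, -3, 5]) := by norm_cast
    rw [this]; exact natCast_mem Λ 5
  have h2 : (2 : ℍ[ℚ, -3, 5]) ∈ Λ := by
    have : (2 : ℍ[ℚ, -3, 5]) = ((2 : ℕ) : ℍ[ℚ, -3, 5]) := by norm_cast
    rw [this]; exact natCast_mem Λ 2
  exact Subring.sub_mem _
    (Subring.add_mem _ h4 (Subring.mul_mem _ h5 (by rw [pow_two]; exact Subring.mul_mem _ qω_mem qω_mem)))
    (Subring.mul_mem _ h2 qy_mem)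

lemma star_mem_Λ {a : ℍ[ℚ, -3, 5]} (ha : a ∈ Λ) : star a ∈ Λ := by
  induction ha using Subring.closure_induction with
  | mem x hx =>
      rcases hx with hx | hx
      · subst hx
        have : star qω = -1 - qω := by ext <;> simp [qω, qx] <;> norm_num
        rw [this]
        exact Subring.sub_mem _ (Subring.neg_mem _ (Subring.one_mem _)) qω_mem
      · rw [Set.mem_singleton_iff] at hx
        subst hx
        have : star qy = -qy := by ext <;> simp [qy]
        rw [this]
        exact Subring.neg_mem _ qy_mem
  | zero => simpa using Subring.zero_mem Λ
  | one => simpa using Subring.one_mem Λ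
  | add x y hx hy px py => rw [star_add]; exact Subring.add_mem _ px py
  | neg x hx px => rw [star_neg]; exact Subring.neg_mem _ px
  | mul x y hx hy px py => rw [star_mul]; exact Subring.mul_mem _ py px

/-- The norm-one units `Λ^{N=1}` of the order `Λ`, as a subgroup of the unit group of `D`. -/
def N1 : Subgroup (ℍ[ℚ, -3, 5])ˣ where
  carrier := {u | (u : ℍ[ℚ, -3, 5]) ∈ Λ ∧ (u : ℍ[ℚ, -3, 5]) * star (u : ℍ[ℚ, -3, 5]) = 1}
  one_mem' := ⟨Subring.one_mem _, by simp⟩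
  mul_mem' := by
    rintro a b ⟨haΛ, ha⟩ ⟨hbΛ, hb⟩
    refine ⟨Subring.mul_mem _ haΛ hbΛ, ?_⟩
    rw [Units.val_mul, star_mul, mul_assoc, ← mul_assoc (b : ℍ[ℚ, -3, 5]), hb, one_mul, ha]
  inv_mem' := by
    rintro u ⟨huΛ, hu⟩
    have hinv : ((u⁻¹ : (ℍ[ℚ, -3, 5])ˣ) : ℍ[ℚ, -3, 5]) = star (u : ℍ[ℚ, -3, 5]) :=
      Units.inv_eq_of_mul_eq_one_right hu
    refine ⟨by rw [hinv]; exact star_mem_Λ huΛ, ?_⟩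
    rw [hinv, star_star, ← hinv, Units.inv_mul]

lemma qω_norm : qω * star qω = 1 := by ext <;> simp [qω, qx] <;> norm_num
lemma qω_norm' : star qω * qω = 1 := by ext <;> simp [qω, qx] <;> norm_num
lemma qh_norm : qh * star qh = 1 := by
  have h4 : ((4 : ℚ) : ℍ[ℚ, -3, 5]) = 4 := by norm_cast
  ext <;> simp [qh, qx, qy, QuaternionAlgebra.re_ofNat, QuaternionAlgebra.imI_ofNat, QuaternionAlgebra.imJ_ofNat, QuaternionAlgebra.imK_ofNat] <;> norm_num
lemma qh_norm' : star qh * qh = 1 := by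
  have h4 : ((4 : ℚ) : ℍ[ℚ, -3, 5]) = 4 := by norm_cast
  ext <;> simp [qh, qx, qy, QuaternionAlgebra.re_ofNat, QuaternionAlgebra.imI_ofNat, QuaternionAlgebra.imJ_ofNat, QuaternionAlgebra.imK_ofNat] <;> norm_num
lemma qγ_norm : qγ * star qγ = 1 := by
  have h4 : ((4 : ℚ) : ℍ[ℚ, -3, 5]) = 4 := by norm_cast
  have h5 : ((5 : ℚ) : ℍ[ℚ, -3, 5]) = 5 := by norm_cast
  have h2 : ((2 : ℚ) : ℍ[ℚ, -3, 5]) = 2 := by norm_cast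
  ext <;> simp [qγ, qω, qx, qy, pow_two, QuaternionAlgebra.re_ofNat, QuaternionAlgebra.imI_ofNat, QuaternionAlgebra.imJ_ofNat, QuaternionAlgebra.imK_ofNat] <;> norm_num
lemma qγ_norm' : star qγ * qγ = 1 := by
  have h4 : ((4 : ℚ) : ℍ[ℚ, -3, 5]) = 4 := by norm_cast
  have h5 : ((5 : ℚ) : ℍ[ℚ, -3, 5]) = 5 := by norm_cast
  have h2 : ((2 : ℚ) : ℍ[ℚ, -3, 5]) = 2 := by norm_cast
  ext <;> simp [qγ, qω, qx, qy, pow_two, QuaternionAlgebra.re_ofNat, QuaternionAlgebra.imI_ofNat, QuaternionAlgebra.imJ_ofNat, QuaternionAlgebra.imK_ofNat] <;> norm_num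

/-- `ω` as an element of `Λ^{N=1}`. -/
def nω : N1 := ⟨⟨qω, star qω, qω_norm, qω_norm'⟩, qω_mem, qω_norm⟩
/-- `h = 4 + xy` as an element of `Λ^{N=1}`. -/
def nh : N1 := ⟨⟨qh, star qh, qh_norm, qh_norm'⟩, qh_mem, qh_norm⟩
/-- `γ = 4 + 5ω² − 2y` as an element of `Λ^{N=1}`. -/
def nγ : N1 := ⟨⟨qγ, star qγ, qγ_norm, qγ_norm'⟩, qγ_mem, qγ_norm⟩
/-- `−1` as an element of `Λ^{N=1}`. -/
def negOne : N1 := ⟨-1, by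
  refine ⟨?_, by simp⟩
  show ((-1 : (ℍ[ℚ, -3, 5])ˣ) : ℍ[ℚ, -3, 5]) ∈ Λ
  simp [Subring.neg_mem, Subring.one_mem]⟩


/-! ### Auxiliary constructions for the level-two cover homomorphism -/

/-- Reduction of a rational number mod 2 (via its numerator; intended for integers). -/
def g2 (r : ℚ) : ZMod 2 := (r.num : ZMod 2)

lemma g2_intCast (n : ℤ) : g2 (n : ℚ) = (n : ZMod 2) := by simp [g2]

/-- `rep a b c d = a + b·ω + c·y + d·ωy` in explicit coordinates. -/
def rep (a b c d : ℤ) : ℍ[ℚ, -3, 5] := ⟨(a:ℚ) - b/2, (b:ℚ)/2, (c:ℚ) - d/2, (d:ℚ)/2⟩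

lemma rep_add (a b c d a' b' c' d' : ℤ) :
    rep a b c d + rep a' b' c' d' = rep (a+a') (b+b') (c+c') (d+d') := by
  ext <;> simp [rep] <;> ring

lemma rep_neg (a b c d : ℤ) : -rep a b c d = rep (-a) (-b) (-c) (-d) := by
  ext <;> simp [rep] <;> ring

lemma rep_mul (a b c d a' b' c' d' : ℤ) :
    rep a b c d * rep a' b' c' d' =
    rep (a*a' - b*b' + 5*(c*c') - 5*(c*d') + 5*(d*d'))
        (a*b' + b*a' - b*b' - 5*(c*d') + 5*(d*c'))
        (a*c' - b*d' + c*a' - c*b' + d*b')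
        (a*d' + b*c' - b*d' - c*b' + d*a') := by
  ext <;> simp [rep, QuaternionAlgebra.mk_mul_mk] <;> push_cast <;> ring

lemma one_eq_rep : (1 : ℍ[ℚ, -3, 5]) = rep 1 0 0 0 := by ext <;> simp [rep]
lemma zero_eq_rep : (0 : ℍ[ℚ, -3, 5]) = rep 0 0 0 0 := by ext <;> simp [rep]
lemma qω_rep : qω = rep 0 1 0 0 := by ext <;> simp [qω, qx, rep] <;> norm_num
lemma qy_rep : qy = rep 0 0 1 0 := by ext <;> simp [qy, rep] <;> norm_num
lemma qh_rep : qh = rep 4 0 1 2 := by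
  have h4 : ((4 : ℚ) : ℍ[ℚ, -3, 5]) = 4 := by norm_cast
  ext <;> simp [qh, qx, qy, rep, QuaternionAlgebra.re_ofNat, QuaternionAlgebra.imI_ofNat, QuaternionAlgebra.imJ_ofNat, QuaternionAlgebra.imK_ofNat] <;> norm_num
lemma qγ_rep : qγ = rep (-1) (-5) (-2) 0 := by
  have h4 : ((4 : ℚ) : ℍ[ℚ, -3, 5]) = 4 := by norm_cast
  have h5 : ((5 : ℚ) : ℍ[ℚ, -3, 5]) = 5 := by norm_cast
  have h2 : ((2 : ℚ) : ℍ[ℚ, -3, 5]) = 2 := by norm_cast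
  ext <;> simp [qγ, qω, qx, qy, rep, pow_two, QuaternionAlgebra.re_ofNat, QuaternionAlgebra.imI_ofNat, QuaternionAlgebra.imJ_ofNat, QuaternionAlgebra.imK_ofNat] <;> norm_num
lemma negOne_rep : (-1 : ℍ[ℚ, -3, 5]) = rep (-1) 0 0 0 := by ext <;> simp [rep]

lemma mem_rep {q : ℍ[ℚ, -3, 5]} (hq : q ∈ Λ) : ∃ a b c d : ℤ, q = rep a b c d := by
  induction hq using Subring.closure_induction with
  | mem x hx =>
      rcases hx with hx | hx
      · exact ⟨0, 1, 0, 0, by rw [hx, qω_rep]⟩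
      · rw [Set.mem_singleton_iff] at hx
        exact ⟨0, 0, 1, 0, by rw [hx, qy_rep]⟩
  | zero => exact ⟨0, 0, 0, 0, zero_eq_rep⟩
  | one => exact ⟨1, 0, 0, 0, one_eq_rep⟩
  | add x y hx hy px py =>
      obtain ⟨a, b, c, d, hx'⟩ := px
      obtain ⟨a', b', c', d', hy'⟩ := py
      exact ⟨_, _, _, _, by rw [hx', hy', rep_add]⟩
  | neg x hx px =>
      obtain ⟨a, b, c, d, hx'⟩ := px
      exact ⟨_, _, _, _, by rw [hx', rep_neg]⟩
  | mul x y hx hy px py =>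
      obtain ⟨a, b, c, d, hx'⟩ := px
      obtain ⟨a', b', c', d', hy'⟩ := py
      exact ⟨_, _, _, _, by rw [hx', hy', rep_mul]⟩

/-- The mod-2 representation as a function on quaternions (only meaningful on `Λ`). -/
def Fmat (q : ℍ[ℚ, -3, 5]) : Matrix (Fin 2) (Fin 2) (ZMod 2) :=
  !![g2 (q.re + q.imI) + g2 (2*q.imK), g2 (2*q.imI) + g2 (q.imJ + q.imK);
     g2 (2*q.imI) + g2 (q.imJ + q.imK) + g2 (2*q.imK),
     g2 (q.re + q.imI) + g2 (2*q.imI) + g2 (2*q.imK)]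

lemma Fmat_rep (a b c d : ℤ) : Fmat (rep a b c d) =
    !![(a:ZMod 2)+d, b+c; b+c+d, a+b+d] := by
  have h1 : ((a:ℚ) - b/2) + (b:ℚ)/2 = ((a:ℤ):ℚ) := by ring
  have h2 : 2*((b:ℚ)/2) = ((b:ℤ):ℚ) := by ring
  have h3 : ((c:ℚ) - d/2) + (d:ℚ)/2 = ((c:ℤ):ℚ) := by ring
  have h4 : 2*((d:ℚ)/2) = ((d:ℤ):ℚ) := by ring
  simp only [Fmat, rep, h1, h2, h3, h4, g2_intCast]

set_option maxRecDepth 8000 in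
lemma key_add : ∀ a b c d a' b' c' d' : ZMod 2,
    (!![(a+a')+(d+d'), (b+b')+(c+c'); (b+b')+(c+c')+(d+d'), (a+a')+(b+b')+(d+d')] :
      Matrix (Fin 2) (Fin 2) (ZMod 2)) =
    !![a+d, b+c; b+c+d, a+b+d] + !![a'+d', b'+c'; b'+c'+d', a'+b'+d'] := by decide

set_option maxRecDepth 8000 in
lemma key_mul : ∀ a b c d a' b' c' d' : ZMod 2,
    (!![(a*a' - b*b' + 5*(c*c') - 5*(c*d') + 5*(d*d')) + (a*d' + b*c' - b*d' - c*b' + d*a'),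
       (a*b' + b*a' - b*b' - 5*(c*d') + 5*(d*c')) + (a*c' - b*d' + c*a' - c*b' + d*b');
       (a*b' + b*a' - b*b' - 5*(c*d') + 5*(d*c')) + (a*c' - b*d' + c*a' - c*b' + d*b')
         + (a*d' + b*c' - b*d' - c*b' + d*a'),
       (a*a' - b*b' + 5*(c*c') - 5*(c*d') + 5*(d*d')) + (a*b' + b*a' - b*b' - 5*(c*d') + 5*(d*c'))
         + (a*d' + b*c' - b*d' - c*b' + d*a')] : Matrix (Fin 2) (Fin 2) (ZMod 2)) =
    !![a+d, b+c; b+c+d, a+b+d] * !![a'+d', b'+c'; b'+c'+d', a'+b'+d'] := by decide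

/-- The ring homomorphism `ρ : Λ → M₂(𝔽₂)`. -/
def ρmap : Λ →+* Matrix (Fin 2) (Fin 2) (ZMod 2) where
  toFun q := Fmat q.1
  map_one' := by show Fmat 1 = 1; rw [one_eq_rep, Fmat_rep]; decide
  map_zero' := by show Fmat 0 = 0; rw [zero_eq_rep, Fmat_rep]; decide
  map_add' q p := by
    obtain ⟨a, b, c, d, hq⟩ := mem_rep q.2
    obtain ⟨a', b', c', d', hp⟩ := mem_rep p.2
    show Fmat (q.1 + p.1) = Fmat q.1 + Fmat p.1
    rw [hq, hp, rep_add, Fmat_rep, Fmat_rep, Fmat_rep]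
    push_cast
    exact key_add _ _ _ _ _ _ _ _
  map_mul' q p := by
    obtain ⟨a, b, c, d, hq⟩ := mem_rep q.2
    obtain ⟨a', b', c', d', hp⟩ := mem_rep p.2
    show Fmat (q.1 * p.1) = Fmat q.1 * Fmat p.1
    rw [hq, hp, rep_mul, Fmat_rep, Fmat_rep, Fmat_rep]
    push_cast
    exact key_mul _ _ _ _ _ _ _ _

/-- The "sign" of a matrix in `GL₂(𝔽₂)` acting on `(𝔽₂)²`, as an element of `ℤ/2`. -/
def sgn (M : Matrix (Fin 2) (Fin 2) (ZMod 2)) : ZMod 2 :=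
  M 0 0 + M 0 1 + M 1 0 + M 1 1 + M 0 0 * M 1 1 + 1

set_option maxRecDepth 8000 in
lemma sgn_mul_aux : ∀ a b c d a' b' c' d' : ZMod 2, a*d - b*c = 1 → a'*d' - b'*c' = 1 →
    sgn (!![a,b;c,d] * !![a',b';c',d']) = sgn !![a,b;c,d] + sgn !![a',b';c',d'] := by decide

lemma zmod2_ne_zero : ∀ x : ZMod 2, x ≠ 0 → x = 1 := by decide

lemma det_eq_one {M N : Matrix (Fin 2) (Fin 2) (ZMod 2)} (h : M * N = 1) : M.det = 1 := by
  have h1 : M.det * N.det = 1 := by rw [← Matrix.det_mul, h, Matrix.det_one]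
  refine zmod2_ne_zero _ fun h0 => ?_
  rw [h0, zero_mul] at h1
  exact one_ne_zero h1.symm

lemma sgn_mul (M N : Matrix (Fin 2) (Fin 2) (ZMod 2)) (hM : M.det = 1) (hN : N.det = 1) :
    sgn (M * N) = sgn M + sgn N := by
  rw [Matrix.det_fin_two] at hM hN
  rw [Matrix.eta_fin_two M, Matrix.eta_fin_two N]
  exact sgn_mul_aux _ _ _ _ _ _ _ _ hM hN

/-- Inclusion of `Λ^{N=1}` into `Λ`. -/
def toΛ (u : N1) : Λ := ⟨u.1, u.2.1⟩

lemma toΛ_mul (u v : N1) : toΛ (u * v) = toΛ u * toΛ v := rfl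

lemma ρ_det (u : N1) : (ρmap (toΛ u)).det = 1 := by
  apply det_eq_one (N := ρmap ⟨star (u.1 : ℍ[ℚ, -3, 5]), star_mem_Λ u.2.1⟩)
  rw [← map_mul, ← map_one ρmap]
  congr 1
  exact Subtype.ext u.2.2

/-- The level-two sign homomorphism `σ₂ : Λ^{N=1} → ℤ/2`. -/
def σ2map : N1 →* Multiplicative (ZMod 2) where
  toFun u := Multiplicative.ofAdd (sgn (ρmap (toΛ u)))
  map_one' := by
    have h1 : toΛ 1 = 1 := rfl
    show Multiplicative.ofAdd (sgn (ρmap (toΛ 1))) = 1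
    rw [h1, map_one ρmap]
    decide
  map_mul' u v := by
    show Multiplicative.ofAdd (sgn (ρmap (toΛ (u * v)))) = _
    rw [toΛ_mul, map_mul, sgn_mul _ _ (ρ_det u) (ρ_det v), ofAdd_add]

/-- There is a ring homomorphism `ρ : Λ → M₂(𝔽₂)` with
`ρ(ω) = [[0,1],[1,1]]` and `ρ(y) = [[0,1],[1,0]]`, and a group homomorphism
`σ₂ : Λ^{N=1} → ℤ/2` (obtained from `ρ` via the sign of the permutation action of
`GL₂(𝔽₂)` on `(𝔽₂)²`) with `σ₂(h) = 1`, `σ₂(γ) = 0`, `σ₂(−1) = 0`; in particular `σ₂`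
is nontrivial. -/
theorem exists_level_two_cover_homomorphism :
    (∃ ρ : Λ →+* Matrix (Fin 2) (Fin 2) (ZMod 2),
      ρ ⟨qω, qω_mem⟩ = !![0, 1; 1, 1] ∧ ρ ⟨qy, qy_mem⟩ = !![0, 1; 1, 0]) ∧
    ∃ σ₂ : N1 →* Multiplicative (ZMod 2),
      σ₂ nh = Multiplicative.ofAdd (1 : ZMod 2) ∧
      σ₂ nγ = Multiplicative.ofAdd (0 : ZMod 2) ∧
      σ₂ negOne = Multiplicative.ofAdd (0 : ZMod 2) ∧
      σ₂ ≠ 1 := by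
  constructor
  · refine ⟨ρmap, ?_, ?_⟩
    · show Fmat qω = _
      rw [qω_rep, Fmat_rep]; decide
    · show Fmat qy = _
      rw [qy_rep, Fmat_rep]; decide
  · have hh : σ2map nh = Multiplicative.ofAdd (1 : ZMod 2) := by
      show Multiplicative.ofAdd (sgn (Fmat qh)) = _
      rw [qh_rep, Fmat_rep]; decide
    refine ⟨σ2map, hh, ?_, ?_, ?_⟩
    · show Multiplicative.ofAdd (sgn (Fmat qγ)) = _
      rw [qγ_rep, Fmat_rep]; decide
    · show Multiplicative.ofAdd (sgn (Fmat (-1))) = _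
      rw [negOne_rep, Fmat_rep]; decide
    · intro h
      have h2 := DFunLike.congr_fun h nh
      rw [hh] at h2
      exact absurd h2 (by decide)
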